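/- Let h₁, h₂ ∈ ℂ^M be nonzero, σ² > 0, r₁, r₂ ≥ 0, and let s = sin²α = 1 − |h₁ᴴh₂|²/(‖h₁‖²‖h₂‖²) with 0 < s ≤ 1. Then σ²(r₁/‖h₁‖² + r₂/‖h₂‖²) ≤ r₁(1+r₂)σ²/(‖h₁‖²(1+r₂s)) + r₂σ²/‖h₂‖², and σ²(r₁/‖h₁‖² + r₂/‖h₂‖²) ≤ (σ²/s)(r₁/‖h₁‖² + r₂/‖h₂‖²). -/
import Mathlib


open scoped InnerProductSpace

/-- Appendix G of the paper (Proposition 4): the orthogonal-channel ZFBF power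
`p = σ²(r₁/‖h₁‖² + r₂/‖h₂‖²)` is at most both `P^NOMA` and `P^ZFBF`. -/
theorem stmt_15 (M : ℕ) (h₁ h₂ : EuclideanSpace ℂ (Fin M)) (hh₁ : h₁ ≠ 0) (hh₂ : h₂ ≠ 0)
    (σsq r₁ r₂ : ℝ) (hσ : 0 < σsq) (hr₁ : 0 ≤ r₁) (hr₂ : 0 ≤ r₂)
    (s : ℝ) (hs : s = 1 - ‖⟪h₁, h₂⟫_ℂ‖ ^ 2 / (‖h₁‖ ^ 2 * ‖h₂‖ ^ 2))
    (hs0 : 0 < s) (hs1 : s ≤ 1) :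
    σsq * (r₁ / ‖h₁‖ ^ 2 + r₂ / ‖h₂‖ ^ 2)
        ≤ r₁ * (1 + r₂) * σsq / (‖h₁‖ ^ 2 * (1 + r₂ * s)) + r₂ * σsq / ‖h₂‖ ^ 2 ∧
    σsq * (r₁ / ‖h₁‖ ^ 2 + r₂ / ‖h₂‖ ^ 2)
        ≤ (σsq / s) * (r₁ / ‖h₁‖ ^ 2 + r₂ / ‖h₂‖ ^ 2) := by
  have ha : (0:ℝ) < ‖h₁‖ ^ 2 := pow_pos (norm_pos_iff.mpr hh₁) 2
  have hb : (0:ℝ) < ‖h₂‖ ^ 2 := pow_pos (norm_pos_iff.mpr hh₂) 2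
  have hden : (0:ℝ) < 1 + r₂ * s := by nlinarith
  constructor
  · have key : σsq * (r₁ / ‖h₁‖ ^ 2) ≤ r₁ * (1 + r₂) * σsq / (‖h₁‖ ^ 2 * (1 + r₂ * s)) := by
      rw [mul_div_assoc', div_le_div_iff₀ ha (by positivity)]
      nlinarith [mul_nonneg (mul_nonneg (mul_nonneg hr₁ hσ.le) ha.le)
        (mul_nonneg hr₂ (by linarith : (0:ℝ) ≤ 1 - s))]
    have e2 : σsq * (r₂ / ‖h₂‖ ^ 2) = r₂ * σsq / ‖h₂‖ ^ 2 := by ring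
    rw [mul_add]
    linarith
  · have hp : 0 ≤ r₁ / ‖h₁‖ ^ 2 + r₂ / ‖h₂‖ ^ 2 := by positivity
    have : σsq ≤ σsq / s := by
      rw [le_div_iff₀ hs0]; nlinarith
    exact mul_le_mul_of_nonneg_right this hp
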